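/- Let f be a monic polynomial of degree n ≥ 2 over K with |n| < 1 and all roots of f of absolute value ≤ 1. If every root w of the derivative f' satisfies |w| = |n|^{-1/(n-1)}, then |z − w| = |n|^{-1/(n-1)} for every root z of f and every root w of f'; in particular I(f) = |n|^{-1/(n-1)}. -/
import Mathlib


/-- `I(f) = max_{z : f(z)=0} min_{w : f'(w)=0} |z - w|`, expressed via `sSup`/`sInf`
(for the polynomials appearing in the statements these sets are finite and nonempty,
so `sSup`/`sInf` are the maximum/minimum). -/
noncomputable def sendovI {K : Type*} [Field K] (v : AbsoluteValue K ℝ)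
    (f : Polynomial K) : ℝ :=
  sSup ((fun z => sInf ((fun w => v (z - w)) '' {w : K | (Polynomial.derivative f).IsRoot w})) ''
    {z : K | f.IsRoot z})

/-- If every root `w` of `f'` satisfies `|w| = |n|^{-1/(n-1)}` (where `f` is monic of degree
`n ≥ 2`, `|n| < 1`, all roots of `f` in the closed unit disk), then `|z - w| = |n|^{-1/(n-1)}`
for every root `z` of `f` and every root `w` of `f'`; in particular `I(f) = |n|^{-1/(n-1)}`. -/
theorem optimal_bound_sufficient {K : Type*} [Field K] [IsAlgClosed K] [CharZero K]
    (v : AbsoluteValue K ℝ) (hna : IsNonarchimedean v)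
    (n : ℕ) (hn : 2 ≤ n) (hsmall : v ((n : K)) < 1)
    (f : Polynomial K) (hmonic : f.Monic) (hdeg : f.natDegree = n)
    (hroots : ∀ z : K, f.IsRoot z → v z ≤ 1)
    (hcrit : ∀ w : K, (Polynomial.derivative f).IsRoot w →
        v w = v ((n : K)) ^ (-(1 / ((n : ℝ) - 1)))) :
    (∀ z : K, f.IsRoot z → ∀ w : K, (Polynomial.derivative f).IsRoot w →
        v (z - w) = v ((n : K)) ^ (-(1 / ((n : ℝ) - 1)))) ∧
      sendovI v f = v ((n : K)) ^ (-(1 / ((n : ℝ) - 1))) := by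
  set c : ℝ := v ((n : K)) ^ (-(1 / ((n : ℝ) - 1))) with hc
  have hnK : ((n : K)) ≠ 0 := by
    exact_mod_cast Nat.cast_ne_zero.mpr (by omega)
  have hvn : 0 < v ((n : K)) := v.pos hnK
  have hnr : (1 : ℝ) ≤ (n : ℝ) - 1 := by
    have : (2 : ℝ) ≤ (n : ℝ) := by exact_mod_cast hn
    linarith
  have hclt : 1 < c := by
    rw [hc, Real.one_lt_rpow_iff_of_pos hvn]
    right
    constructor
    · exact hsmall
    · have : 0 < 1 / ((n : ℝ) - 1) := by positivity
      linarith
  -- main pointwise statement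
  have hmain : ∀ z : K, f.IsRoot z → ∀ w : K, (Polynomial.derivative f).IsRoot w →
      v (z - w) = c := by
    intro z hz w hw
    have hvw : v w = c := hcrit w hw
    have hvz : v z ≤ 1 := hroots z hz
    have hzw : v z < v w := by rw [hvw]; linarith
    have h1 : v (z - w) ≤ v w := by
      have := hna z (-w)
      rw [v.map_neg] at this
      rw [sub_eq_add_neg]
      exact this.trans (by rw [max_eq_right hzw.le])
    have h2 : v w ≤ max (v (z - w)) (v z) := by
      have := hna (-(z - w)) z
      rw [v.map_neg] at this
      simpa using this
    have h3 : v w ≤ v (z - w) := by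
      rcases le_max_iff.mp h2 with h | h
      · exact h
      · exact absurd h (not_le.mpr hzw)
    rw [hvw] at h1 h3
    exact le_antisymm h1 h3
  refine ⟨hmain, ?_⟩
  -- existence of roots
  have hf0 : f ≠ 0 := hmonic.ne_zero
  obtain ⟨z0, hz0⟩ : ∃ z : K, f.IsRoot z := by
    apply IsAlgClosed.exists_root
    exact Polynomial.degree_ne_of_natDegree_ne (n := 0) (by omega)
  have hdcoeff : (Polynomial.derivative f).coeff (n - 1) = (n : K) := by
    have h1 : n - 1 + 1 = n := by omega
    rw [Polynomial.coeff_derivative, h1]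
    have : f.coeff n = 1 := by
      rw [← hdeg]; exact hmonic.coeff_natDegree
    rw [this, one_mul, Nat.cast_sub (by omega : 1 ≤ n)]
    push_cast
    ring
  have hdd : n - 1 ≤ (Polynomial.derivative f).natDegree :=
    Polynomial.le_natDegree_of_ne_zero (by rw [hdcoeff]; exact hnK)
  obtain ⟨w0, hw0⟩ : ∃ w : K, (Polynomial.derivative f).IsRoot w := by
    apply IsAlgClosed.exists_root
    exact Polynomial.degree_ne_of_natDegree_ne (n := 0) (by omega)
  -- compute sendovI
  have hinner : ∀ z : K, f.IsRoot z →
      (fun w => v (z - w)) '' {w : K | (Polynomial.derivative f).IsRoot w} = {c} := by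
    intro z hz
    rw [Set.eq_singleton_iff_nonempty_unique_mem]
    refine ⟨⟨v (z - w0), ⟨w0, hw0, rfl⟩⟩, ?_⟩
    rintro x ⟨w, hw, rfl⟩
    exact hmain z hz w hw
  have houter : (fun z => sInf ((fun w => v (z - w)) ''
      {w : K | (Polynomial.derivative f).IsRoot w})) '' {z : K | f.IsRoot z} = {c} := by
    rw [Set.eq_singleton_iff_nonempty_unique_mem]
    constructor
    · exact ⟨_, ⟨z0, hz0, rfl⟩⟩
    · rintro x ⟨z, hz, rfl⟩
      dsimp only
      rw [hinner z hz, csInf_singleton]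
  rw [sendovI, houter, csSup_singleton]
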